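/- For every T ∈ 𝒯_Λ there exists an index i ∈ {1,…,n} with |T_{n,n} − λ_i| ≤ √2 · |b(T)|. If moreover |b(T)| < γ/(2√2), where γ := min_{i ≠ j} |λ_i − λ_j| is the spectral gap of Λ, then this index is unique. Consequently, for every ε ∈ (0, γ/(2√2)), the sets D^i_{Λ,ε} for i = 1,…,n are pairwise disjoint and their union equals {T ∈ 𝒯_Λ : |b(T)| ≤ ε}. -/

import Mathlib

open Matrix Filter Topology

attribute [local instance] Matrix.normedAddCommGroup Matrix.normedSpace

noncomputable section

attribute [local instance] Classical.propDecidable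

/-- The first `n+1` columns of the `(n+2)×(n+2)` matrix `M` are linearly independent,
i.e. `M` is *almost invertible*. -/
def AlmostInv {n : ℕ} (M : Matrix (Fin (n+2)) (Fin (n+2)) ℝ) : Prop :=
  LinearIndependent ℝ (fun j : Fin (n+1) => fun i => M i j.castSucc)

/-- `M = Q⋆ R⋆` with `Q⋆` orthogonal of determinant one and `R⋆` upper triangular
with positive diagonal except possibly at the last entry. -/
def IsQsRs {n : ℕ} (M Q R : Matrix (Fin (n+2)) (Fin (n+2)) ℝ) : Prop :=
  Qᵀ * Q = 1 ∧ Q.det = 1 ∧ (∀ i j : Fin (n+2), j < i → R i j = 0) ∧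
    (∀ i : Fin (n+1), 0 < R i.castSucc i.castSucc) ∧ M = Q * R

/-- `M = Q R` with `Q` orthogonal and `R` upper triangular with positive diagonal. -/
def IsQR {n : ℕ} (M Q R : Matrix (Fin (n+2)) (Fin (n+2)) ℝ) : Prop :=
  Qᵀ * Q = 1 ∧ (∀ i j : Fin (n+2), j < i → R i j = 0) ∧
    (∀ i : Fin (n+2), 0 < R i i) ∧ M = Q * R

/-- `E_n = diag(1, …, 1, -1)`. -/
def En (n : ℕ) : Matrix (Fin (n+2)) (Fin (n+2)) ℝ :=
  Matrix.diagonal (fun i => if i = Fin.last (n+1) then -1 else 1)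

/-- The signed shifted QR step `F_s(T) = Q⋆ᵀ T Q⋆` where `T - s I = Q⋆ R⋆`. -/
def Fs {n : ℕ} (s : ℝ) (T : Matrix (Fin (n+2)) (Fin (n+2)) ℝ) :
    Matrix (Fin (n+2)) (Fin (n+2)) ℝ :=
  if h : ∃ Q R, IsQsRs (T - s • 1) Q R then (h.choose)ᵀ * T * h.choose else 0

/-- The (plain) shifted QR step `Φ(T, s) = Qᵀ T Q` where `T - s I = Q R`. -/
def Phi {n : ℕ} (T : Matrix (Fin (n+2)) (Fin (n+2)) ℝ) (s : ℝ) :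
    Matrix (Fin (n+2)) (Fin (n+2)) ℝ :=
  if h : ∃ Q R, IsQR (T - s • 1) Q R then (h.choose)ᵀ * T * h.choose else 0

/-- `T` is symmetric and tridiagonal. -/
def SymTridiag {n : ℕ} (T : Matrix (Fin (n+2)) (Fin (n+2)) ℝ) : Prop :=
  Tᵀ = T ∧ ∀ i j : Fin (n+2), (i.val + 1 < j.val ∨ j.val + 1 < i.val) → T i j = 0

/-- `b(T)`, the lowest subdiagonal entry `T_{n, n-1}` (1-based). -/
def lowb {n : ℕ} (T : Matrix (Fin (n+2)) (Fin (n+2)) ℝ) : ℝ :=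
  T (Fin.last (n+1)) ⟨n, by omega⟩

/-- `T` is unreduced: all subdiagonal entries are nonzero. -/
def Unreduced {n : ℕ} (T : Matrix (Fin (n+2)) (Fin (n+2)) ℝ) : Prop :=
  ∀ i : Fin (n+1), T i.succ i.castSucc ≠ 0

/-- `𝒯_Λ`: real symmetric tridiagonal matrices with the same characteristic polynomial
as `Λ = diagonal lam`. -/
def TSet {n : ℕ} (lam : Fin (n+2) → ℝ) : Set (Matrix (Fin (n+2)) (Fin (n+2)) ℝ) :=
  {T | SymTridiag T ∧ T.charpoly = (Matrix.diagonal lam).charpoly}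

/-- The deflation neighborhood `D^i_{Λ,ε}`. -/
def Dset {n : ℕ} (lam : Fin (n+2) → ℝ) (ε : ℝ) (i : Fin (n+2)) :
    Set (Matrix (Fin (n+2)) (Fin (n+2)) ℝ) :=
  {T ∈ TSet lam | |lowb T| ≤ ε ∧
    |T (Fin.last (n+1)) (Fin.last (n+1)) - lam i| ≤ Real.sqrt 2 * ε}

/-- The deflation set `D^i_{Λ,0}`. -/
def D0 {n : ℕ} (lam : Fin (n+2) → ℝ) (i : Fin (n+2)) :
    Set (Matrix (Fin (n+2)) (Fin (n+2)) ℝ) :=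
  {T ∈ TSet lam | lowb T = 0 ∧ T (Fin.last (n+1)) (Fin.last (n+1)) = lam i}

/-- The deflation domain `D^i_Λ`: matrices `T ∈ 𝒯_Λ` with `T - λ_i I` almost invertible. -/
def DD {n : ℕ} (lam : Fin (n+2) → ℝ) (i : Fin (n+2)) :
    Set (Matrix (Fin (n+2)) (Fin (n+2)) ℝ) :=
  {T ∈ TSet lam | AlmostInv (T - lam i • 1)}

/-- A simple shift strategy. -/
def SimpleShift {n : ℕ} (lam : Fin (n+2) → ℝ)
    (σ : Matrix (Fin (n+2)) (Fin (n+2)) ℝ → ℝ) : Prop :=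
  (∀ T ∈ TSet lam, σ (En n * T * En n) = σ T) ∧
  ∃ C > 0, ∀ T ∈ TSet lam, ∃ i : Fin (n+2), |σ T - lam i| ≤ C * |lowb T|

/-- The vector space of real symmetric tridiagonal matrices. -/
def STSpace (n : ℕ) : Submodule ℝ (Matrix (Fin (n+2)) (Fin (n+2)) ℝ) where
  carrier := {T | SymTridiag T}
  add_mem' := by
    rintro a b ⟨ha1, ha2⟩ ⟨hb1, hb2⟩
    refine ⟨by rw [Matrix.transpose_add, ha1, hb1], fun i j h => ?_⟩
    simp [Matrix.add_apply, ha2 i j h, hb2 i j h]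
  zero_mem' := ⟨Matrix.transpose_zero, fun i j _ => rfl⟩
  smul_mem' := by
    rintro c a ⟨ha1, ha2⟩
    refine ⟨by rw [Matrix.transpose_smul, ha1], fun i j h => ?_⟩
    simp [Matrix.smul_apply, ha2 i j h]

/-- `σ` is smooth near `A ⊆ 𝒯_Λ`: there are an open subset `U` of the vector space of
symmetric tridiagonal matrices containing `A` and a `C^∞` function on `U` agreeing with
`σ` on `U ∩ 𝒯_Λ`. -/
def SmoothNear {n : ℕ} (lam : Fin (n+2) → ℝ)
    (σ : Matrix (Fin (n+2)) (Fin (n+2)) ℝ → ℝ)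
    (A : Set (Matrix (Fin (n+2)) (Fin (n+2)) ℝ)) : Prop :=
  ∃ (U : Set (STSpace n)) (σt : STSpace n → ℝ),
    IsOpen U ∧
    (∀ T : STSpace n, (T : Matrix (Fin (n+2)) (Fin (n+2)) ℝ) ∈ A → T ∈ U) ∧
    ContDiffOn ℝ (⊤ : ℕ∞) σt U ∧
    ∀ T : STSpace n, T ∈ U → (T : Matrix (Fin (n+2)) (Fin (n+2)) ℝ) ∈ TSet lam →
      σt T = σ (T : Matrix (Fin (n+2)) (Fin (n+2)) ℝ)

/-- The Frobenius norm `‖A‖ = √(trace(Aᵀ A))`. -/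
def frobNorm {n : ℕ} (A : Matrix (Fin (n+2)) (Fin (n+2)) ℝ) : ℝ :=
  Real.sqrt (Matrix.trace (Aᵀ * A))

end

section MyAux
open Matrix Polynomial

lemma myEvalCharpoly {m : ℕ} (M : Matrix (Fin m) (Fin m) ℝ) (μ : ℝ) :
    M.charpoly.eval μ = (Matrix.diagonal (fun _ : Fin m => μ) - M).det := by
  rw [Matrix.charpoly, _root_.eval_det, Matrix.matPolyEquiv_charmatrix]
  rw [Polynomial.eval_sub, Polynomial.eval_X, Polynomial.eval_C]
  congr 1

lemma mySpecEq {m : ℕ} (lam : Fin m → ℝ) (T : Matrix (Fin m) (Fin m) ℝ)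
    (hcp : T.charpoly = (Matrix.diagonal lam).charpoly) {μ : ℝ}
    (hμ : μ ∈ spectrum ℝ T) : ∃ i, μ = lam i := by
  have hdet : (Matrix.diagonal (fun _ : Fin m => μ) - T).det = 0 := by
    by_contra h
    apply spectrum.mem_iff.mp hμ
    have : algebraMap ℝ (Matrix (Fin m) (Fin m) ℝ) μ - T
        = Matrix.diagonal (fun _ : Fin m => μ) - T := by
      rw [Matrix.algebraMap_eq_diagonal]; rfl
    rw [this]
    exact (Matrix.isUnit_iff_isUnit_det _).mpr (isUnit_iff_ne_zero.mpr h)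
  have h0 : (Matrix.diagonal lam).charpoly.eval μ = 0 := by
    rw [← hcp, myEvalCharpoly, hdet]
  rw [myEvalCharpoly] at h0
  have : Matrix.diagonal (fun _ : Fin m => μ) - Matrix.diagonal lam
      = Matrix.diagonal (fun i => μ - lam i) := by
    rw [Matrix.diagonal_sub]
  rw [this, Matrix.det_diagonal] at h0
  obtain ⟨i, _, hi⟩ := Finset.prod_eq_zero_iff.mp h0
  exact ⟨i, by linarith [sub_eq_zero.mp hi]⟩

lemma myKey {n : ℕ} (T : Matrix (Fin (n+2)) (Fin (n+2)) ℝ) (hT : SymTridiag T) :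
    ∃ μ ∈ spectrum ℝ T,
      |T (Fin.last (n+1)) (Fin.last (n+1)) - μ| ≤ |lowb T| := by
  set t := T (Fin.last (n+1)) (Fin.last (n+1)) with ht
  set b := lowb T with hb
  have hsym : Tᵀ = T := hT.1
  have hherm : T.IsHermitian := by
    ext i j
    simp only [Matrix.conjTranspose_apply, star_trivial]
    conv_rhs => rw [← hsym]
    rw [Matrix.transpose_apply]
  set eig := hherm.eigenvalues with heig
  set B := hherm.eigenvectorBasis with hB
  set idx : Fin (n+2) := ⟨n, by omega⟩ with hidx
  have hidxne : idx ≠ Fin.last (n+1) := by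
    simp [hidx, Fin.ext_iff, Fin.last]
  set e : EuclideanSpace ℝ (Fin (n+2)) := EuclideanSpace.single (Fin.last (n+1)) 1 with he
  set y : EuclideanSpace ℝ (Fin (n+2)) := EuclideanSpace.single idx b with hy
  have h_ye : ∀ i, y i = (T *ᵥ fun k => e k) i - t * e i := by
    intro i
    have hmv : (T *ᵥ fun k => e k) i = T i (Fin.last (n+1)) := by
      simp [Matrix.mulVec, he, dotProduct, EuclideanSpace.single_apply]
    rw [hmv]
    rcases eq_or_ne i (Fin.last (n+1)) with h | h
    · subst h
      simp [hy, EuclideanSpace.single_apply, hidxne.symm, he, ← ht]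
    · rcases eq_or_ne i idx with h2 | h2
      · subst h2
        have hTb : T idx (Fin.last (n+1)) = b := by
          rw [hb, lowb]
          conv_lhs => rw [← hsym]
          rw [Matrix.transpose_apply]
        simp [hy, EuclideanSpace.single_apply, hTb, he, h]
      · have hz : T i (Fin.last (n+1)) = 0 := by
          apply hT.2
          left
          have h1 : i.val ≠ n + 1 := fun hc => h (Fin.ext hc)
          have h2' : i.val ≠ n := fun hc => h2 (Fin.ext hc)
          have := i.isLt
          simp only [Fin.val_last]
          omega
        simp [hy, EuclideanSpace.single_apply, hz, he, h, h2]
  have hinner : ∀ x z : EuclideanSpace ℝ (Fin (n+2)),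
      (inner ℝ x z : ℝ) = ∑ i, x i * z i := by
    intro x z
    simp [PiLp.inner_apply, mul_comm]
  set c : Fin (n+2) → ℝ := fun j => ∑ i, B j i * e i with hc
  have hcinner : ∀ j, (inner ℝ (B j) e : ℝ) = c j := fun j => hinner _ _
  have hcj : ∀ j, (inner ℝ (B j) y : ℝ) = (eig j - t) * c j := by
    intro j
    have huj : T *ᵥ (fun k => B j k) = eig j • (fun k => B j k) :=
      hherm.mulVec_eigenvectorBasis j
    rw [hinner (B j) y]
    calc ∑ i, B j i * y i
        = ∑ i, ((B j i) * (T *ᵥ fun k => e k) i - t * (B j i * e i)) := by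
          apply Finset.sum_congr rfl; intro i _; rw [h_ye i]; ring
      _ = ((fun k => B j k) ⬝ᵥ (T *ᵥ fun k => e k)) - t * ∑ i, B j i * e i := by
          rw [Finset.sum_sub_distrib, ← Finset.mul_sum]; rfl
      _ = ((T *ᵥ fun k => B j k) ⬝ᵥ fun k => e k) - t * ∑ i, B j i * e i := by
          rw [Matrix.dotProduct_mulVec]
          conv_lhs => rw [← hsym]
          rw [Matrix.vecMul_transpose]
      _ = (eig j - t) * ∑ i, B j i * e i := by
          rw [huj, smul_dotProduct]
          simp only [smul_eq_mul, dotProduct]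
          ring
      _ = (eig j - t) * c j := rfl
  have hyy : (inner ℝ y y : ℝ) = b * b := by
    rw [hinner, hy]
    simp [EuclideanSpace.single_apply, Finset.sum_ite_eq', mul_ite]
  have hee : (inner ℝ e e : ℝ) = 1 := by
    rw [hinner, he]
    simp [EuclideanSpace.single_apply, Finset.sum_ite_eq', mul_ite]
  have h1 : ∑ j, ((eig j - t) * c j) * ((eig j - t) * c j) = b * b := by
    have hpv := B.sum_inner_mul_inner y y
    rw [hyy] at hpv
    rw [← hpv]
    apply Finset.sum_congr rfl
    intro j _
    rw [show (inner ℝ y (B j) : ℝ) = (eig j - t) * c j from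
      (real_inner_comm y (B j)).symm.trans (hcj j), hcj j]
  have h2 : ∑ j, c j * c j = 1 := by
    have hpv := B.sum_inner_mul_inner e e
    rw [hee] at hpv
    rw [← hpv]
    apply Finset.sum_congr rfl
    intro j _
    rw [show (inner ℝ e (B j) : ℝ) = c j from
      (real_inner_comm e (B j)).symm.trans (hcinner j), hcinner j]
  obtain ⟨j₀, -, hj₀⟩ := Finset.exists_min_image Finset.univ
    (fun j => (eig j - t) * (eig j - t)) ⟨0, Finset.mem_univ 0⟩
  have hmin : (eig j₀ - t) * (eig j₀ - t) ≤ b * b := by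
    calc (eig j₀ - t) * (eig j₀ - t)
        = (eig j₀ - t) * (eig j₀ - t) * ∑ j, c j * c j := by rw [h2, mul_one]
      _ = ∑ j, (eig j₀ - t) * (eig j₀ - t) * (c j * c j) := by rw [Finset.mul_sum]
      _ ≤ ∑ j, ((eig j - t) * c j) * ((eig j - t) * c j) := by
          apply Finset.sum_le_sum
          intro j _
          have hmm := mul_le_mul_of_nonneg_right (hj₀ j (Finset.mem_univ j))
            (mul_self_nonneg (c j))
          calc (eig j₀ - t) * (eig j₀ - t) * (c j * c j)
              ≤ (eig j - t) * (eig j - t) * (c j * c j) := hmm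
            _ = ((eig j - t) * c j) * ((eig j - t) * c j) := by ring
      _ = b * b := h1
  refine ⟨eig j₀, hherm.eigenvalues_mem_spectrum_real j₀, ?_⟩
  have habs : |eig j₀ - t| ≤ |b| := by
    have hsq := Real.sqrt_le_sqrt hmin
    rwa [Real.sqrt_mul_self_eq_abs, Real.sqrt_mul_self_eq_abs] at hsq
  rwa [abs_sub_comm] at habs

lemma myKey2 {n : ℕ} (lam : Fin (n+2) → ℝ) (T : Matrix (Fin (n+2)) (Fin (n+2)) ℝ)
    (hT : T ∈ TSet lam) :
    ∃ i : Fin (n+2), |T (Fin.last (n+1)) (Fin.last (n+1)) - lam i| ≤ |lowb T| := by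
  obtain ⟨μ, hμspec, hμ⟩ := myKey T hT.1
  obtain ⟨i, rfl⟩ := mySpecEq lam T hT.2 hμspec
  exact ⟨i, hμ⟩

end MyAux


theorem stmt5 (n : ℕ) (lam : Fin (n+2) → ℝ) (hlam : StrictMono lam)
    (γ : ℝ) (hγ : IsLeast {d : ℝ | ∃ i j : Fin (n+2), i ≠ j ∧ d = |lam i - lam j|} γ) :
    (∀ T ∈ TSet lam, ∃ i : Fin (n+2),
      |T (Fin.last (n+1)) (Fin.last (n+1)) - lam i| ≤ Real.sqrt 2 * |lowb T|) ∧
    (∀ T ∈ TSet lam, |lowb T| < γ / (2 * Real.sqrt 2) →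
      ∃! i : Fin (n+2),
        |T (Fin.last (n+1)) (Fin.last (n+1)) - lam i| ≤ Real.sqrt 2 * |lowb T|) ∧
    (∀ ε : ℝ, 0 < ε → ε < γ / (2 * Real.sqrt 2) →
      (∀ i j : Fin (n+2), i ≠ j → Disjoint (Dset lam ε i) (Dset lam ε j)) ∧
      (⋃ i : Fin (n+2), Dset lam ε i) = {T ∈ TSet lam | |lowb T| ≤ ε}) := by
  have hs2 : (1:ℝ) ≤ Real.sqrt 2 := by
    nlinarith [Real.sq_sqrt (show (0:ℝ) ≤ 2 by norm_num), Real.sqrt_nonneg 2]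
  have hs2pos : (0:ℝ) < Real.sqrt 2 := lt_of_lt_of_le one_pos hs2
  have hγle : ∀ i j : Fin (n+2), i ≠ j → γ ≤ |lam i - lam j| :=
    fun i j hij => hγ.2 ⟨i, j, hij, rfl⟩
  have part1 : ∀ T ∈ TSet lam, ∃ i : Fin (n+2),
      |T (Fin.last (n+1)) (Fin.last (n+1)) - lam i| ≤ Real.sqrt 2 * |lowb T| := by
    intro T hT
    obtain ⟨i, hi⟩ := myKey2 lam T hT
    exact ⟨i, le_trans hi (le_mul_of_one_le_left (abs_nonneg _) hs2)⟩
  refine ⟨part1, ?_, ?_⟩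
  · intro T hT hb
    obtain ⟨i, hi⟩ := part1 T hT
    refine ⟨i, hi, ?_⟩
    intro j hj
    by_contra hne
    have h1 := hγle j i hne
    have htri : |lam j - lam i| ≤ |T (Fin.last (n+1)) (Fin.last (n+1)) - lam j| +
        |T (Fin.last (n+1)) (Fin.last (n+1)) - lam i| := by
      have h := abs_sub_le (lam j) (T (Fin.last (n+1)) (Fin.last (n+1))) (lam i)
      rwa [abs_sub_comm (lam j) (T (Fin.last (n+1)) (Fin.last (n+1)))] at h
    have h2 : |lowb T| * (2 * Real.sqrt 2) < γ :=
      (lt_div_iff₀ (by positivity)).mp hb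
    nlinarith
  · intro ε hε hεγ
    have h2 : ε * (2 * Real.sqrt 2) < γ := (lt_div_iff₀ (by positivity)).mp hεγ
    constructor
    · intro i j hij
      rw [Set.disjoint_left]
      rintro T ⟨hT1, hbi, hi⟩ ⟨-, -, hj⟩
      have h1 := hγle i j hij
      have htri : |lam i - lam j| ≤ |T (Fin.last (n+1)) (Fin.last (n+1)) - lam i| +
          |T (Fin.last (n+1)) (Fin.last (n+1)) - lam j| := by
        have h := abs_sub_le (lam i) (T (Fin.last (n+1)) (Fin.last (n+1))) (lam j)
        rwa [abs_sub_comm (lam i) (T (Fin.last (n+1)) (Fin.last (n+1)))] at h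
      nlinarith
    · ext T
      simp only [Set.mem_iUnion, Set.mem_setOf_eq, Dset]
      constructor
      · rintro ⟨i, hT1, hbi, -⟩
        exact ⟨hT1, hbi⟩
      · rintro ⟨hT1, hbε⟩
        obtain ⟨i, hi⟩ := part1 T hT1
        exact ⟨i, hT1, hbε, le_trans hi (mul_le_mul_of_nonneg_left hbε hs2pos.le)⟩
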